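/- Let V ≥ 1 and n ≤ N be natural numbers, and let ε, δ ∈ (0,1). Let X be a binomial random variable with n trials and success probability 1/V. If (N : ℝ) ≥ V/(δ·ε²), then Pr(|V·X − n| ≥ ε·N) ≤ δ. (This is the exact balls-and-bins form of the paper's sampling-accuracy theorem: the number X of the n = f_p packets of prefix p that land in a fixed one of V bins is Binomial(n, 1/V), and its rescaling V·X estimates f_p within ε·N with probability at least 1 − δ once N exceeds the convergence threshold, stated here with the rigorous Chebyshev threshold V/(δ·ε²) in place of Z_{1−δ/2}·V·ε⁻².) -/

import Mathlib

open MeasureTheory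

/-- `X` is a binomial random variable with `n` trials and success probability `p`
on the probability space `(Ω, μ)`: its law is given by the binomial pmf. -/
def IsBinomial {Ω : Type*} [MeasurableSpace Ω] (μ : Measure Ω) (X : Ω → ℕ) (n : ℕ) (p : ℝ) :
    Prop :=
  ∀ k : ℕ, μ {ω | X ω = k} = ENNReal.ofReal ((n.choose k : ℝ) * p ^ k * (1 - p) ^ (n - k))

open Finset in
lemma binom_var (n : ℕ) (p : ℝ) :
    ∑ k ∈ Finset.range (n+1), ((n:ℝ)*p - k)^2 * ((n.choose k : ℝ) * p^k * (1-p)^(n-k))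
      = n*p*(1-p) := by
  have h := congrArg (Polynomial.eval p) (bernsteinPolynomial.variance (R := ℝ) n)
  simp only [Polynomial.eval_finset_sum, Polynomial.eval_mul, Polynomial.eval_pow,
    Polynomial.eval_sub, Polynomial.eval_smul, Polynomial.eval_natCast, Polynomial.eval_X,
    Polynomial.eval_one, bernsteinPolynomial, nsmul_eq_mul] at h
  convert h using 2

/-- **Sampling accuracy (exact balls-and-bins form).** If `X ∼ Binomial(n, 1/V)` with
`n ≤ N` and `N ≥ V / (δ·ε²)`, then `Pr(|V·X − n| ≥ ε·N) ≤ δ`. -/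
theorem binomial_sampling_accuracy {Ω : Type*} [MeasurableSpace Ω] (μ : Measure Ω)
    [IsProbabilityMeasure μ] (V n N : ℕ) (hV : 1 ≤ V) (hnN : n ≤ N) (ε δ : ℝ)
    (hε : ε ∈ Set.Ioo (0 : ℝ) 1) (hδ : δ ∈ Set.Ioo (0 : ℝ) 1)
    (X : Ω → ℕ) (hX : IsBinomial μ X n (1 / (V : ℝ)))
    (hthresh : (N : ℝ) ≥ (V : ℝ) / (δ * ε ^ 2)) :
    μ {ω | ε * (N : ℝ) ≤ |(V : ℝ) * (X ω : ℝ) - (n : ℝ)|} ≤ ENNReal.ofReal δ := by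
  obtain ⟨hε0, hε1⟩ := hε
  obtain ⟨hδ0, hδ1⟩ := hδ
  have hV0 : (0:ℝ) < V := by exact_mod_cast hV
  have hV1 : (1:ℝ) ≤ V := by exact_mod_cast hV
  have hN0 : (0:ℝ) < N := lt_of_lt_of_le (by positivity) hthresh
  set p : ℝ := 1 / (V:ℝ) with hp
  have hp0 : 0 ≤ p := by positivity
  have hp1 : p ≤ 1 := by rw [hp]; rw [div_le_one hV0]; exact hV1
  set b : ℕ → ℝ := fun k => (n.choose k : ℝ) * p^k * (1-p)^(n-k) with hb
  have hb0 : ∀ k, 0 ≤ b k := fun k => by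
    have : (0:ℝ) ≤ 1 - p := by linarith
    positivity
  -- bound the measure by a sum
  have hsub : {ω | ε * (N : ℝ) ≤ |(V : ℝ) * (X ω : ℝ) - (n : ℝ)|} ⊆
      ⋃ k : ℕ, (if ε * (N:ℝ) ≤ |(V:ℝ) * (k:ℝ) - (n:ℝ)| then {ω | X ω = k} else ∅) := by
    intro ω hω
    refine Set.mem_iUnion.2 ⟨X ω, ?_⟩
    have hω' : ε * (N:ℝ) ≤ |(V:ℝ) * (X ω : ℝ) - (n:ℝ)| := hω
    rw [if_pos hω']
    exact rfl
  have h1 : μ {ω | ε * (N : ℝ) ≤ |(V : ℝ) * (X ω : ℝ) - (n : ℝ)|} ≤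
      ∑' k : ℕ, (if ε * (N:ℝ) ≤ |(V:ℝ) * (k:ℝ) - (n:ℝ)| then ENNReal.ofReal (b k) else 0) := by
    refine (measure_mono hsub).trans ((measure_iUnion_le _).trans ?_)
    refine ENNReal.tsum_le_tsum fun k => ?_
    split_ifs with h
    · exact le_of_eq (hX k)
    · simp
  refine h1.trans ?_
  -- restrict the tsum to a finite sum
  set c : ℕ → ℝ := fun k => if ε * (N:ℝ) ≤ |(V:ℝ) * (k:ℝ) - (n:ℝ)| then b k else 0 with hc
  have hc0 : ∀ k, 0 ≤ c k := fun k => by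
    rw [hc]; dsimp only; split_ifs; exacts [hb0 k, le_refl 0]
  have h2 : (∑' k : ℕ, (if ε * (N:ℝ) ≤ |(V:ℝ) * (k:ℝ) - (n:ℝ)| then ENNReal.ofReal (b k) else 0))
      = ENNReal.ofReal (∑ k ∈ Finset.range (n+1), c k) := by
    rw [tsum_eq_sum (s := Finset.range (n+1)) ?_]
    · rw [ENNReal.ofReal_sum_of_nonneg fun k _ => hc0 k]
      refine Finset.sum_congr rfl fun k _ => ?_
      rw [hc]; dsimp only; split_ifs <;> simp
    · intro k hk
      have hkn : n < k := by simpa using hk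
      have : b k = 0 := by
        rw [hb]; dsimp only; rw [Nat.choose_eq_zero_of_lt hkn]; simp
      split_ifs <;> simp [this]
  rw [h2]
  refine ENNReal.ofReal_le_ofReal ?_
  -- Chebyshev argument
  have key : ∀ k ∈ Finset.range (n+1),
      c k ≤ ((V:ℝ)/(ε*N))^2 * (((n:ℝ)*p - k)^2 * b k) := by
    intro k _
    rw [hc]; dsimp only
    split_ifs with h
    · have hVp : (V:ℝ) * p = 1 := by rw [hp]; field_simp
      have heq : (V:ℝ)*(k:ℝ) - (n:ℝ) = (V:ℝ) * ((k:ℝ) - (n:ℝ)*p) := by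
        rw [hp]; field_simp
      have hdist : ε * N / V ≤ |(k:ℝ) - (n:ℝ)*p| := by
        rw [div_le_iff₀ hV0]
        calc ε * N ≤ |(V:ℝ) * k - n| := h
          _ = |(k:ℝ) - (n:ℝ)*p| * V := by
              rw [heq, abs_mul, abs_of_pos hV0, mul_comm]
      have hsq : (ε * N / V)^2 ≤ ((n:ℝ)*p - k)^2 := by
        rw [abs_sub_comm] at hdist
        calc (ε*N/V)^2 ≤ |(n:ℝ)*p - k|^2 :=
              pow_le_pow_left₀ (by positivity) hdist 2
          _ = ((n:ℝ)*p - k)^2 := sq_abs _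
      have hεN : 0 < ε * N := by positivity
      have := mul_le_mul_of_nonneg_right hsq (hb0 k)
      calc b k = ((V:ℝ)/(ε*N))^2 * ((ε*N/V)^2 * b k) := by
            field_simp
          _ ≤ ((V:ℝ)/(ε*N))^2 * (((n:ℝ)*p - k)^2 * b k) := by
            exact mul_le_mul_of_nonneg_left this (by positivity)
    · have := hb0 k
      positivity
  calc ∑ k ∈ Finset.range (n+1), c k
      ≤ ∑ k ∈ Finset.range (n+1), ((V:ℝ)/(ε*N))^2 * (((n:ℝ)*p - k)^2 * b k) :=
        Finset.sum_le_sum key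
    _ = ((V:ℝ)/(ε*N))^2 * ((n:ℝ)*p*(1-p)) := by
        rw [← Finset.mul_sum, binom_var n p]
    _ ≤ ((V:ℝ)/(ε*N))^2 * ((n:ℝ)*p) := by
        refine mul_le_mul_of_nonneg_left ?_ (by positivity)
        nlinarith [Nat.cast_nonneg (α := ℝ) n, mul_nonneg (Nat.cast_nonneg (α := ℝ) n) hp0]
    _ = (n:ℝ) * V / (ε^2 * N^2) := by
        rw [hp]; field_simp
    _ ≤ (N:ℝ) * V / (ε^2 * N^2) := by
        gcongr
    _ = (V:ℝ) / (ε^2 * N) := by field_simp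
    _ ≤ δ := by
        rw [div_le_iff₀ (by positivity)]
        have := (div_le_iff₀ (by positivity : 0 < δ * ε^2)).mp hthresh
        nlinarith
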